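/- Let 𝔫 be a finite-dimensional nilpotent Lie algebra over ℂ and let ρ : 𝔫 → M_n(ℂ) be a Lie algebra homomorphism. Let x, y ∈ 𝔫 and let ρ(x) = S_x + N_x and ρ(y) = S_y + N_y be Jordan–Chevalley decompositions. Then N_x + N_y is the nilpotent part of ρ(x+y); that is, N_x + N_y is nilpotent, commutes with ρ(x+y), and ρ(x+y) − (N_x + N_y) is diagonalizable. -/

import Mathlib

open Polynomial Module Module.End LieModule


/-- A complex square matrix is diagonalizable (semisimple) if it is conjugate to a
diagonal matrix. -/
def Matrix.IsDiagonalizable {n : ℕ} (A : Matrix (Fin n) (Fin n) ℂ) : Prop :=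
  ∃ P : Matrix (Fin n) (Fin n) ℂ, IsUnit P ∧ (P * A * P⁻¹).IsDiag


lemma aux_aeval_diagonal {n : ℕ} (p : ℂ[X]) (d : Fin n → ℂ) :
    aeval (Matrix.diagonal d) p = Matrix.diagonal (fun i => p.eval (d i)) := by
  induction p using Polynomial.induction_on' with
  | add f g hf hg => simp [hf, hg, Matrix.diagonal_add]
  | monomial k a =>
      simp only [aeval_monomial, Matrix.algebraMap_eq_diagonal, Matrix.diagonal_pow,
        Matrix.diagonal_mul_diagonal, eval_monomial]
      congr 1

lemma aux_diag_isSemisimple {n : ℕ} (A : Matrix (Fin n) (Fin n) ℂ)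
    (hA : A.IsDiagonalizable) : Module.End.IsSemisimple (Matrix.toLinAlgEquiv' A) := by
  obtain ⟨P, hP, hD⟩ := hA
  have hdet : IsUnit P.det := (Matrix.isUnit_iff_isUnit_det P).mp hP
  set d : Fin n → ℂ := (P * A * P⁻¹).diag with hd
  have hDdiag : P * A * P⁻¹ = Matrix.diagonal d := (hD.diagonal_diag).symm
  have hA' : A = P⁻¹ * Matrix.diagonal d * P := by
    rw [← hDdiag]
    have h2 : P⁻¹ * (P * A * P⁻¹) * P = P⁻¹ * P * A * (P⁻¹ * P) := by noncomm_ring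
    rw [h2, Matrix.nonsing_inv_mul P hdet, one_mul, mul_one]
  -- conjugation algebra hom
  let φ : Matrix (Fin n) (Fin n) ℂ →ₐ[ℂ] Matrix (Fin n) (Fin n) ℂ :=
    { toFun := fun B => P⁻¹ * B * P
      map_one' := by
        show P⁻¹ * 1 * P = 1
        rw [mul_one, Matrix.nonsing_inv_mul P hdet]
      map_mul' := fun B C => by
        show P⁻¹ * (B * C) * P = (P⁻¹ * B * P) * (P⁻¹ * C * P)
        have h1 : B * C = B * (P * P⁻¹) * C := by
          rw [Matrix.mul_nonsing_inv P hdet, mul_one]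
        rw [h1]; noncomm_ring
      map_zero' := by simp
      map_add' := fun B C => by
        show P⁻¹ * (B + C) * P = P⁻¹ * B * P + P⁻¹ * C * P
        noncomm_ring
      commutes' := fun c => by
        show P⁻¹ * algebraMap ℂ _ c * P = algebraMap ℂ _ c
        simp only [Algebra.algebraMap_eq_smul_one]
        rw [Matrix.mul_smul, Matrix.smul_mul, mul_one, Matrix.nonsing_inv_mul P hdet] }
  set s : Finset ℂ := Finset.image d Finset.univ with hs
  set p : ℂ[X] := ∏ μ ∈ s, (X - C μ) with hp
  have hsf : Squarefree p := by
    refine Polynomial.Separable.squarefree ?_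
    rw [hp]
    exact Polynomial.separable_prod_X_sub_C_iff'.mpr (fun a _ b _ hab => hab)
  have hevald : ∀ i, p.eval (d i) = 0 := by
    intro i
    rw [hp, Polynomial.eval_prod]
    exact Finset.prod_eq_zero (Finset.mem_image_of_mem d (Finset.mem_univ i))
      (by simp)
  have haevalD : aeval (Matrix.diagonal d) p = 0 := by
    rw [aux_aeval_diagonal]
    simp only [hevald]
    exact Matrix.diagonal_zero
  have haevalA : aeval A p = 0 := by
    have : A = φ (Matrix.diagonal d) := hA'
    rw [this, Polynomial.aeval_algHom_apply, haevalD, map_zero]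
  refine Module.End.isSemisimple_of_squarefree_aeval_eq_zero hsf ?_
  rw [Polynomial.aeval_algEquiv]
  simp [haevalA]


lemma aux_isDiagonalizable_of_iSup_eigenspace {n : ℕ} (A : Matrix (Fin n) (Fin n) ℂ)
    (s : Finset ℂ)
    (h : ⊤ ≤ ⨆ μ : s, Module.End.eigenspace (Matrix.toLinAlgEquiv' A) (μ : ℂ)) :
    A.IsDiagonalizable := by
  classical
  set f : Module.End ℂ (Fin n → ℂ) := Matrix.toLinAlgEquiv' A with hf
  have hindep : iSupIndep (fun μ : s => f.eigenspace (μ : ℂ)) :=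
    f.eigenspaces_iSupIndep.comp Subtype.coe_injective
  have hint : DirectSum.IsInternal (fun μ : s => f.eigenspace (μ : ℂ)) := by
    rw [DirectSum.isInternal_submodule_iff_iSupIndep_and_iSup_eq_top]
    exact ⟨hindep, le_antisymm le_top h⟩
  let bs : ∀ μ : s, Basis (Fin (finrank ℂ (f.eigenspace (μ : ℂ)))) ℂ (f.eigenspace (μ : ℂ)) :=
    fun μ => finBasis ℂ _
  let b := hint.collectedBasis bs
  have hcard : Fintype.card (Σ μ : s, Fin (finrank ℂ (f.eigenspace (μ : ℂ)))) = n := by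
    have := Module.finrank_eq_card_basis b
    simpa using this.symm
  let e := Fintype.equivFinOfCardEq hcard
  let b' := b.reindex e
  have heig : ∀ j : Fin n, f (b' j) = ((e.symm j).1 : ℂ) • (b' j) := by
    intro j
    have : b' j = b (e.symm j) := by simp [b']
    rw [this]
    exact mem_eigenspace_iff.mp (hint.collectedBasis_mem bs (e.symm j))
  -- build matrices
  let c : Fin n → ℂ := fun j => ((e.symm j).1 : ℂ)
  let Q : Matrix (Fin n) (Fin n) ℂ := (Pi.basisFun ℂ (Fin n)).toMatrix ⇑b'
  have hQ : ∀ i j, Q i j = b' j i := by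
    intro i j
    simp [Q, Basis.toMatrix_apply]
  have hinv : Invertible Q := (Pi.basisFun ℂ (Fin n)).invertibleToMatrix b'
  have hQunit : IsUnit Q := isUnit_of_invertible Q
  have hQdet : IsUnit Q.det := (Matrix.isUnit_iff_isUnit_det Q).mp hQunit
  have hAQ : A * Q = Q * Matrix.diagonal c := by
    ext i j
    rw [Matrix.mul_diagonal]
    have h1 : (A * Q) i j = (A.mulVec (fun k => Q k j)) i := rfl
    rw [h1]
    have h2 : (fun k => Q k j) = b' j := by ext k; rw [hQ]
    rw [h2]
    have h3 : A.mulVec (b' j) = f (b' j) := by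
      simp [hf, Matrix.toLinAlgEquiv'_apply]
    rw [h3, heig j]
    show (((e.symm j).1 : ℂ) • b' j) i = Q i j * c j
    rw [Pi.smul_apply, smul_eq_mul, hQ, mul_comm]
  refine ⟨Q⁻¹, Matrix.isUnit_nonsing_inv_iff.mpr hQunit, ?_⟩
  rw [Matrix.nonsing_inv_nonsing_inv Q hQdet]
  have : Q⁻¹ * A * Q = Matrix.diagonal c := by
    rw [Matrix.mul_assoc, hAQ, ← Matrix.mul_assoc, Matrix.nonsing_inv_mul Q hQdet, one_mul]
  rw [this]
  exact Matrix.isDiag_diagonal c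

attribute [local instance] LieRing.ofAssociativeRing

/-- Let `ρ` be a matrix representation of a finite-dimensional nilpotent complex Lie
algebra `𝔫`, and let `ρ x = Sx + Nx`, `ρ y = Sy + Ny` be Jordan–Chevalley
decompositions.  Then `Nx + Ny` is the nilpotent part of `ρ (x + y)`: it is
nilpotent, commutes with `ρ (x + y)`, and `ρ (x + y) - (Nx + Ny)` is diagonalizable. -/
theorem nilpotentPart_add {L : Type*} [LieRing L] [LieAlgebra ℂ L]
    [FiniteDimensional ℂ L] [LieRing.IsNilpotent L] {n : ℕ}
    (ρ : L →ₗ⁅ℂ⁆ Matrix (Fin n) (Fin n) ℂ) (x y : L)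
    (Sx Nx Sy Ny : Matrix (Fin n) (Fin n) ℂ)
    (hx : ρ x = Sx + Nx) (hSx : Sx.IsDiagonalizable) (hNx : IsNilpotent Nx)
    (hSNx : Sx * Nx = Nx * Sx)
    (hy : ρ y = Sy + Ny) (hSy : Sy.IsDiagonalizable) (hNy : IsNilpotent Ny)
    (hSNy : Sy * Ny = Ny * Sy) :
    IsNilpotent (Nx + Ny) ∧
      (Nx + Ny) * ρ (x + y) = ρ (x + y) * (Nx + Ny) ∧
      (ρ (x + y) - (Nx + Ny)).IsDiagonalizable := by
  classical
  set V : Type := Fin n → ℂ with hV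
  let φ : Matrix (Fin n) (Fin n) ℂ ≃ₐ[ℂ] Module.End ℂ V := Matrix.toLinAlgEquiv'
  let π : L →ₗ⁅ℂ⁆ Module.End ℂ V :=
    ((lieEquivMatrix' (R := ℂ) (n := Fin n)).symm.toLieHom).comp ρ
  letI : LieRingModule L V := LieRingModule.compLieHom V π
  letI : LieModule ℂ L V := LieModule.compLieHom V π
  have htoEnd : ∀ z : L, LieModule.toEnd ℂ L V z = φ (ρ z) := by
    intro z
    ext m
    rfl
  have hfinrank : finrank ℂ V = n := finrank_fin_fun ℂ
  -- Step 1: the semisimple parts act as scalars on each weight space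
  have hSmul : ∀ (z : L) (Sz Nz : Matrix (Fin n) (Fin n) ℂ), ρ z = Sz + Nz →
      Sz.IsDiagonalizable → IsNilpotent Nz → Sz * Nz = Nz * Sz →
      ∀ (χ : Weight ℂ L V) (m : V), m ∈ genWeightSpace V (χ : L → ℂ) →
        φ Sz m = (χ : L → ℂ) z • m := by
    intro z Sz Nz hz hSz hNz hSNz χ m hm
    have hm1 : m ∈ (LieModule.toEnd ℂ L V z).genEigenspace ((χ : L → ℂ) z) ⊤ := by
      have h2 := genWeightSpace_le_genWeightSpaceOf V z (χ : L → ℂ) hm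
      rw [mem_genWeightSpaceOf] at h2
      exact (Module.End.mem_genEigenspace_top).mpr h2
    have hcm : Commute (Sz + Nz) Sz := by
      unfold Commute SemiconjBy
      noncomm_ring [hSNz]
    have hcomm : Commute (LieModule.toEnd ℂ L V z) (φ Sz) := by
      rw [htoEnd z, hz]
      exact hcm.map (φ : Matrix (Fin n) (Fin n) ℂ →* Module.End ℂ V)
    have hnil : IsNilpotent ((LieModule.toEnd ℂ L V z) - φ Sz) := by
      rw [htoEnd z, hz, ← map_sub, add_sub_cancel_left]
      exact hNz.map (φ : Matrix (Fin n) (Fin n) ℂ →+* Module.End ℂ V)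
    exact Module.End.apply_eq_of_mem_of_comm_of_isFinitelySemisimple_of_isNil hm1 hcomm
      (aux_diag_isSemisimple Sz hSz).isFinitelySemisimple hnil
  have hsxm := hSmul x Sx Nx hx hSx hNx hSNx
  have hsym := hSmul y Sy Ny hy hSy hNy hSNy
  set F : Module.End ℂ V := LieModule.toEnd ℂ L V (x + y) with hF
  set N : Module.End ℂ V := φ (Nx + Ny) with hN
  set c : Weight ℂ L V → ℂ := fun χ => (χ : L → ℂ) x + (χ : L → ℂ) y with hc
  have hcx : ∀ χ : Weight ℂ L V, (χ : L → ℂ) (x + y) = c χ := fun χ =>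
    LinearWeights.map_add (χ : L → ℂ) χ.genWeightSpace_ne_bot x y
  -- pointwise description of N on weight spaces
  have hNpt : ∀ (χ : Weight ℂ L V) (m : V), m ∈ genWeightSpace V (χ : L → ℂ) →
      N m = F m - c χ • m := by
    intro χ m hm
    have h1 : Nx = ρ x - Sx := by rw [hx, add_sub_cancel_left]
    have h2 : Ny = ρ y - Sy := by rw [hy, add_sub_cancel_left]
    have h3 : N = φ (ρ x) + φ (ρ y) - φ Sx - φ Sy := by
      rw [hN, h1, h2]; simp only [map_add, map_sub]; abel
    have h4 : F = φ (ρ x) + φ (ρ y) := by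
      rw [hF, htoEnd (x + y), map_add, map_add]
    rw [h3, h4]
    simp only [LinearMap.sub_apply, LinearMap.add_apply]
    rw [hsxm χ m hm, hsym χ m hm, hc]
    simp only [add_smul]
    abel
  -- invariance of weight spaces
  have hFInv : ∀ (χ : Weight ℂ L V) (m : V), m ∈ genWeightSpace V (χ : L → ℂ) →
      F m ∈ genWeightSpace V (χ : L → ℂ) := by
    intro χ m hm
    have : F m = ⁅x + y, m⁆ := rfl
    rw [this]
    exact (genWeightSpace V (χ : L → ℂ)).lie_mem hm
  have hNInv : ∀ (χ : Weight ℂ L V) (m : V), m ∈ genWeightSpace V (χ : L → ℂ) →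
      N m ∈ genWeightSpace V (χ : L → ℂ) := by
    intro χ m hm
    rw [hNpt χ m hm]
    exact Submodule.sub_mem _ (hFInv χ m hm) (Submodule.smul_mem _ _ hm)
  -- top is the sup of weight spaces
  have hTop : (⊤ : Submodule ℂ V) =
      ⨆ χ : Weight ℂ L V, (genWeightSpace V (χ : L → ℂ)).toSubmodule := by
    rw [← LieSubmodule.iSup_toSubmodule, iSup_genWeightSpace_eq_top',
      LieSubmodule.top_toSubmodule]
  -- power computation
  have hpow : ∀ (χ : Weight ℂ L V) (k : ℕ) (m : V), m ∈ genWeightSpace V (χ : L → ℂ) →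
      (N ^ k) m = ((F - c χ • 1) ^ k) m := by
    intro χ k
    induction k with
    | zero => intro m _; simp
    | succ k ih =>
        intro m hm
        rw [pow_succ, pow_succ, Module.End.mul_apply, Module.End.mul_apply]
        have hNm : N m = (F - c χ • 1) m := by
          rw [hNpt χ m hm]
          simp [LinearMap.sub_apply]
        rw [← hNm]
        exact ih (N m) (hNInv χ m hm)
  -- N^n vanishes on each weight space
  have hker : ∀ χ : Weight ℂ L V,
      (genWeightSpace V (χ : L → ℂ)).toSubmodule ≤ LinearMap.ker (N ^ n) := by
    intro χ m hm
    rw [LinearMap.mem_ker, hpow χ n m hm]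
    have h2 := genWeightSpace_le_genWeightSpaceOf V (x + y) (χ : L → ℂ) hm
    rw [mem_genWeightSpaceOf] at h2
    have h3 : m ∈ (LieModule.toEnd ℂ L V (x + y)).maxGenEigenspace ((χ : L → ℂ) (x + y)) :=
      (Module.End.mem_maxGenEigenspace _ _ _).mpr h2
    rw [Module.End.maxGenEigenspace_eq_genEigenspace_finrank, hfinrank] at h3
    rw [Module.End.mem_genEigenspace_nat] at h3
    rw [hcx χ] at h3
    have : F - c χ • 1 = LieModule.toEnd ℂ L V (x + y) - c χ • 1 := by rw [hF]
    rw [this]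
    exact h3
  have hNn : N ^ n = 0 := by
    rw [← LinearMap.ker_eq_top, eq_top_iff, hTop]
    exact iSup_le hker
  -- conclusion 1
  have hnilNN : IsNilpotent (Nx + Ny) := by
    refine ⟨n, φ.injective ?_⟩
    rw [map_pow, map_zero, ← hN, hNn]
  -- conclusion 2
  have hcomm2 : (Nx + Ny) * ρ (x + y) = ρ (x + y) * (Nx + Ny) := by
    apply φ.injective
    rw [map_mul, map_mul, ← hN]
    have hφF : φ (ρ (x + y)) = F := (htoEnd (x + y)).symm
    rw [hφF]
    have hker2 : ∀ χ : Weight ℂ L V,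
        (genWeightSpace V (χ : L → ℂ)).toSubmodule ≤ LinearMap.ker (N * F - F * N) := by
      intro χ m hm
      rw [LinearMap.mem_ker, LinearMap.sub_apply, Module.End.mul_apply, Module.End.mul_apply]
      rw [hNpt χ (F m) (hFInv χ m hm), hNpt χ m hm, map_sub, map_smul]
      abel
    have hz : N * F - F * N = 0 := by
      rw [← LinearMap.ker_eq_top, eq_top_iff, hTop]
      exact iSup_le hker2
    have := sub_eq_zero.mp hz
    exact this
  refine ⟨hnilNN, hcomm2, ?_⟩
  -- conclusion 3
  have hS : ρ (x + y) - (Nx + Ny) = Sx + Sy := by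
    rw [map_add, hx, hy]
    abel
  rw [hS]
  haveI : Fintype (Weight ℂ L V) := Fintype.ofFinite _
  refine aux_isDiagonalizable_of_iSup_eigenspace (Sx + Sy)
    (Finset.image c Finset.univ) ?_
  have hle : ∀ χ : Weight ℂ L V, (genWeightSpace V (χ : L → ℂ)).toSubmodule ≤
      ⨆ μ : (Finset.image c Finset.univ : Finset ℂ),
        Module.End.eigenspace (Matrix.toLinAlgEquiv' (Sx + Sy)) (μ : ℂ) := by
    intro χ m hm
    have hmem : m ∈ Module.End.eigenspace (Matrix.toLinAlgEquiv' (Sx + Sy)) (c χ) := by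
      rw [Module.End.mem_eigenspace_iff]
      have : Matrix.toLinAlgEquiv' (Sx + Sy) = φ Sx + φ Sy := by
        show φ (Sx + Sy) = φ Sx + φ Sy
        rw [map_add]
      rw [this, LinearMap.add_apply, hsxm χ m hm, hsym χ m hm, hc]
      rw [add_smul]
    exact le_iSup (fun μ : (Finset.image c Finset.univ : Finset ℂ) =>
      Module.End.eigenspace (Matrix.toLinAlgEquiv' (Sx + Sy)) (μ : ℂ))
      ⟨c χ, Finset.mem_image_of_mem c (Finset.mem_univ χ)⟩ hmem
  rw [hTop]
  exact iSup_le hle
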